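/- Continuity of the nonlinearity along admissible curves (Lemma 3.7): for every R > 0 and every δ ∈ (0, κ₀/R], and every continuous function u : [0,δ] → Y with ‖u(t)‖ ≤ R t² for all t ∈ [0,δ], the map t ↦ f(t, u(t)) (with value 0 ∈ Y at t = 0) is a continuous map from [0,δ] into Y. Moreover, if u is α-Hölder continuous for some α ∈ (0,1), then t ↦ f(t, u(t)) is also α-Hölder continuous from [0,δ] into Y. -/

import Mathlib

noncomputable section

/-- `ℝ^d` as Euclidean space. -/
abbrev Euc (d : ℕ) : Type := EuclideanSpace ℝ (Fin d)

/-- Generalized binomial coefficient `binom(α,k) = (∏_{i=0}^{k−1}(α−i))/k!`. -/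
noncomputable def rbinom (α : ℝ) (k : ℕ) : ℝ :=
  (∏ i ∈ Finset.range k, (α - i)) / (Nat.factorial k : ℝ)

/-- The singular nonlinearity `f(t,u)`, defined pointwise by
`f(t,u)(y) = t a(y) + t^p λ(y) − (η(y)/β) Σ_{k≥2} binom(β+1,k)(u(y)/(tη(y)))^k`
`+ θ[t^p γ(y)(tη(y)+u(y))/((t^p γ(y))^β + |tη(y)+u(y)|^β)^{1/β} − (tη(y)+u(y))]`,
with `β = 1/(p−1)` and `1/β = p−1`; by Lean's conventions quotients with vanishing
denominator are read as `0`. -/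
noncomputable def fNL {d : ℕ} (p θ : ℝ) (η γ lam a : Euc d → ℝ)
    (t : ℝ) (u : Euc d → ℝ) (y : Euc d) : ℝ :=
  t * a y + t ^ p * lam y
    - (η y / (1 / (p - 1))) *
        ∑' k : ℕ, rbinom (1 / (p - 1) + 1) (k + 2) * (u y / (t * η y)) ^ (k + 2)
    + θ * (t ^ p * γ y * (t * η y + u y) /
          ((t ^ p * γ y) ^ (1 / (p - 1)) + |t * η y + u y| ^ (1 / (p - 1))) ^ (p - 1)
        - (t * η y + u y))

set_option maxHeartbeats 2000000

lemma rbinom_succ (α : ℝ) (k : ℕ) :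
    rbinom α (k + 1) = rbinom α k * ((α - k) / (k + 1)) := by
  unfold rbinom
  rw [Finset.prod_range_succ, Nat.factorial_succ, div_mul_div_comm]
  congr 1
  push_cast
  ring

lemma rpow_sub_rpow_le (p δ s t : ℝ) (hp : 1 ≤ p) (h0 : 0 ≤ t) (hts : t ≤ s) (hs : s ≤ δ) :
    s ^ p - t ^ p ≤ p * δ ^ (p - 1) * (s - t) := by
  rcases eq_or_lt_of_le (h0.trans hts) with hs0 | hs0
  · have ht0 : t = 0 := le_antisymm (hs0 ▸ hts) h0
    rw [← hs0, ht0]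
    norm_num
  · have hr : -1 ≤ t / s - 1 := by
      have : 0 ≤ t / s := div_nonneg h0 hs0.le
      linarith
    have hB := one_add_mul_self_le_rpow_one_add hr hp
    have hts' : 1 + (t / s - 1) = t / s := by ring
    rw [hts'] at hB
    have hdiv : (t / s) ^ p = t ^ p / s ^ p := Real.div_rpow h0 hs0.le p
    rw [hdiv] at hB
    have hsp : (0:ℝ) < s ^ p := Real.rpow_pos_of_pos hs0 _
    have h1 : s ^ p + p * s ^ p * (t / s - 1) ≤ t ^ p := by
      have := mul_le_mul_of_nonneg_left hB hsp.le
      rw [mul_div_cancel₀ _ hsp.ne'] at this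
      nlinarith
    have hq : s ^ p = s ^ (p - 1) * s := by
      rw [← Real.rpow_add_one hs0.ne' (p - 1), sub_add_cancel]
    have h2 : s ^ p * (t / s) = s ^ (p - 1) * t := by
      rw [hq]; field_simp
    have h3 : s ^ p - t ^ p ≤ p * s ^ (p - 1) * (s - t) := by
      have he : p * s ^ p * (t / s - 1) = p * (s ^ p * (t / s)) - p * s ^ p := by ring
      rw [he, h2] at h1
      nlinarith
    have h5 : s ^ (p - 1) ≤ δ ^ (p - 1) :=
      Real.rpow_le_rpow hs0.le hs (by linarith)
    calc s ^ p - t ^ p ≤ p * s ^ (p - 1) * (s - t) := h3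
      _ ≤ p * δ ^ (p - 1) * (s - t) := by
          apply mul_le_mul_of_nonneg_right _ (by linarith)
          exact mul_le_mul_of_nonneg_left h5 (by linarith)

lemma abs_rpow_sub_rpow_le (p δ s t : ℝ) (hp : 1 ≤ p) (hs : s ∈ Set.Icc 0 δ)
    (ht : t ∈ Set.Icc 0 δ) : |s ^ p - t ^ p| ≤ p * δ ^ (p - 1) * |s - t| := by
  rcases le_total t s with h | h
  · rw [abs_of_nonneg (by nlinarith [Real.rpow_le_rpow ht.1 h (by linarith : (0:ℝ) ≤ p)]),
      abs_of_nonneg (by linarith)]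
    exact rpow_sub_rpow_le p δ s t hp ht.1 h hs.2
  · rw [abs_sub_comm, abs_sub_comm s t,
      abs_of_nonneg (by nlinarith [Real.rpow_le_rpow hs.1 h (by linarith : (0:ℝ) ≤ p)]),
      abs_of_nonneg (by linarith)]
    exact rpow_sub_rpow_le p δ t s hp hs.1 h ht.2

lemma rbinom_abs_succ (α : ℝ) (k : ℕ) (hk : α ≤ k) :
    |rbinom α (k + 1)| = |rbinom α k| * (((k : ℝ) - α) / (k + 1)) := by
  rw [rbinom_succ, abs_mul, abs_div, abs_of_nonpos (by linarith : α - (k:ℝ) ≤ 0),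
    abs_of_nonneg (by positivity : (0:ℝ) ≤ (k:ℝ) + 1)]
  ring_nf

lemma summable_rbinom_mul (α : ℝ) (hα : 1 < α) :
    Summable (fun k : ℕ => ((k : ℝ) + 2) * |rbinom α (k + 2)|) := by
  set N : ℕ := max 2 ⌈α⌉₊ with hN
  have hNα : α ≤ (N : ℝ) := by
    have h1 : (⌈α⌉₊ : ℝ) ≤ N := by exact_mod_cast le_max_right 2 ⌈α⌉₊
    exact (Nat.le_ceil α).trans h1
  have hN2 : (2 : ℝ) ≤ (N : ℝ) := by exact_mod_cast le_max_left 2 ⌈α⌉₊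
  set K : ℝ := (|rbinom α N| + 1) * (N : ℝ) ^ (1 + α) with hKdef
  have hNpos : (0:ℝ) < N := by linarith
  have hK : 0 < K := by positivity
  have decay : ∀ j : ℕ, |rbinom α (N + j)| ≤ K * ((N + j : ℕ) : ℝ) ^ (-(1 + α)) := by
    intro j
    induction j with
    | zero =>
      have : K * ((N : ℝ)) ^ (-(1 + α)) = |rbinom α N| + 1 := by
        rw [hKdef, Real.rpow_neg hNpos.le, mul_assoc,
          mul_inv_cancel₀ (Real.rpow_pos_of_pos hNpos _).ne', mul_one]
      simp only [Nat.add_zero]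
      rw [this]
      linarith [abs_nonneg (rbinom α N)]
    | succ j ih =>
      have hkα : α ≤ ((N + j : ℕ) : ℝ) := by
        push_cast; push_cast at hNα; linarith [Nat.cast_nonneg (α := ℝ) j]
      set k : ℝ := ((N + j : ℕ) : ℝ) with hkdef
      have hkpos : (0:ℝ) < k := by rw [hkdef]; push_cast; linarith [Nat.cast_nonneg (α := ℝ) j]
      have hsucc : ((N + (j+1) : ℕ) : ℝ) = k + 1 := by rw [hkdef]; push_cast; ring
      rw [show N + (j+1) = (N + j) + 1 from rfl, rbinom_abs_succ α (N+j) hkα]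
      -- Bernoulli step
      have hs : (-1:ℝ) ≤ -(1 / (k+1)) := by
        rw [neg_le_neg_iff]
        rw [div_le_one (by linarith)]
        linarith
      have hb := one_add_mul_self_le_rpow_one_add hs (by linarith : (1:ℝ) ≤ 1 + α)
      have e1 : 1 + -(1 / (k+1)) = k / (k+1) := by field_simp; ring
      have e3 : 1 + (1+α) * -(1 / (k+1)) = (k - α) / (k+1) := by field_simp; ring
      rw [e1, e3, Real.div_rpow hkpos.le (by linarith)] at hb
      -- hb : (k - α)/(k+1) ≤ k^(1+α) / (k+1)^(1+α)
      have hP : (0:ℝ) < k ^ (1+α) := Real.rpow_pos_of_pos hkpos _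
      have hQ : (0:ℝ) < (k+1) ^ (1+α) := Real.rpow_pos_of_pos (by linarith) _
      have key : k ^ (-(1+α)) * ((k - α)/(k+1)) ≤ (k+1) ^ (-(1+α)) := by
        rw [Real.rpow_neg hkpos.le, Real.rpow_neg (by linarith : (0:ℝ) ≤ k+1)]
        calc (k ^ (1+α))⁻¹ * ((k - α)/(k+1))
            ≤ (k ^ (1+α))⁻¹ * (k ^ (1+α) / (k+1) ^ (1+α)) := by
              exact mul_le_mul_of_nonneg_left hb (inv_nonneg.2 hP.le)
          _ = ((k+1) ^ (1+α))⁻¹ := by field_simp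
      calc |rbinom α (N+j)| * ((k - α)/(k+1))
          ≤ (K * k ^ (-(1+α))) * ((k - α)/(k+1)) := by
            exact mul_le_mul_of_nonneg_right ih (div_nonneg (by linarith) (by linarith))
        _ = K * (k ^ (-(1+α)) * ((k - α)/(k+1))) := by ring
        _ ≤ K * ((k+1) ^ (-(1+α))) := mul_le_mul_of_nonneg_left key hK.le
        _ = K * ((N + (j+1) : ℕ) : ℝ) ^ (-(1+α)) := by rw [hsucc]
  -- summability of comparison series
  have S0 : Summable (fun n : ℕ => (n : ℝ) ^ (-α)) :=
    Real.summable_nat_rpow.2 (by linarith)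
  have S1 : Summable (fun n : ℕ => K * ((n + (N + 2) : ℕ) : ℝ) ^ (-α)) :=
    (((summable_nat_add_iff (N + 2)).2 S0)).mul_left K
  rw [← summable_nat_add_iff N]
  apply Summable.of_nonneg_of_le (fun n => by positivity) _ S1
  intro n
  have hdec := decay (n + 2)
  have hcast : ((N + (n + 2) : ℕ) : ℝ) = ((n + (N + 2) : ℕ) : ℝ) := by push_cast; ring
  have hxpos : (0:ℝ) < ((n + (N + 2) : ℕ) : ℝ) := by positivity
  have hsplit : ((n + (N + 2) : ℕ) : ℝ) ^ (-(1+α)) * ((n + (N + 2) : ℕ) : ℝ)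
      = ((n + (N + 2) : ℕ) : ℝ) ^ (-α) := by
    rw [← Real.rpow_add_one hxpos.ne']
    norm_num
  have heq : N + (n + 2) = n + (N + 2) := by omega
  calc (((n + N : ℕ) : ℝ) + 2) * |rbinom α (n + N + 2)|
      = ((n + (N+2) : ℕ):ℝ) * |rbinom α (N + (n+2))| := by
        rw [show n + N + 2 = N + (n + 2) from by omega]; push_cast; ring
    _ ≤ ((n + (N+2) : ℕ):ℝ) * (K * ((N + (n + 2) : ℕ) : ℝ) ^ (-(1 + α))) := by
        exact mul_le_mul_of_nonneg_left hdec (by positivity)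
    _ = K * (((n + (N + 2) : ℕ) : ℝ) ^ (-(1+α)) * ((n + (N + 2) : ℕ) : ℝ)) := by
        rw [hcast]; ring
    _ = K * ((n + (N + 2) : ℕ) : ℝ) ^ (-α) := by rw [hsplit]

/-- The regularized quotient `A w / (A^{1/q} + w^{1/q})^q`. -/
noncomputable def hfun (q A w : ℝ) : ℝ := A * w / ((A ^ (1/q) + w ^ (1/q)) ^ q)

lemma hfun_comm (q A w : ℝ) : hfun q A w = hfun q w A := by
  unfold hfun; rw [mul_comm, add_comm]

lemma rpow_root (q A : ℝ) (hq : 0 < q) (hA : 0 ≤ A) : (A ^ (1/q)) ^ q = A := by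
  rw [one_div, Real.rpow_inv_rpow hA hq.ne']

lemma le_denom (q A w : ℝ) (hq : 0 < q) (hA : 0 ≤ A) (hw : 0 ≤ w) :
    A ≤ (A ^ (1/q) + w ^ (1/q)) ^ q := by
  calc A = (A ^ (1/q)) ^ q := (rpow_root q A hq hA).symm
    _ ≤ (A ^ (1/q) + w ^ (1/q)) ^ q := by
        apply Real.rpow_le_rpow (Real.rpow_nonneg hA _) _ hq.le
        have := Real.rpow_nonneg hw (1/q)
        linarith

lemma hfun_nonneg (q A w : ℝ) (hA : 0 ≤ A) (hw : 0 ≤ w) : 0 ≤ hfun q A w := by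
  unfold hfun
  apply div_nonneg (by positivity)
  positivity

lemma hfun_zero (q w : ℝ) : hfun q 0 w = 0 := by unfold hfun; simp

lemma hfun_mono (q A w v : ℝ) (hq : 0 < q) (hA : 0 ≤ A) (hw : 0 ≤ w) (hwv : w ≤ v) :
    hfun q A w ≤ hfun q A v := by
  rcases eq_or_lt_of_le hA with hA0 | hA0
  · rw [← hA0, hfun_zero, hfun_zero]
  have hv : 0 ≤ v := hw.trans hwv
  have hAr : (0:ℝ) < A ^ (1/q) := Real.rpow_pos_of_pos hA0 _
  have hwr : (0:ℝ) ≤ w ^ (1/q) := Real.rpow_nonneg hw _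
  have hvr : (0:ℝ) ≤ v ^ (1/q) := Real.rpow_nonneg hv _
  have hDw : (0:ℝ) < (A ^ (1/q) + w ^ (1/q)) ^ q := Real.rpow_pos_of_pos (by linarith) _
  have hDv : (0:ℝ) < (A ^ (1/q) + v ^ (1/q)) ^ q := Real.rpow_pos_of_pos (by linarith) _
  unfold hfun
  rw [div_le_div_iff₀ hDw hDv]
  have key : w * (A ^ (1/q) + v ^ (1/q)) ^ q ≤ v * (A ^ (1/q) + w ^ (1/q)) ^ q := by
    have e1 : w * (A ^ (1/q) + v ^ (1/q)) ^ q
        = (w ^ (1/q) * (A ^ (1/q) + v ^ (1/q))) ^ q := by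
      rw [Real.mul_rpow hwr (by linarith), rpow_root q w hq hw]
    have e2 : v * (A ^ (1/q) + w ^ (1/q)) ^ q
        = (v ^ (1/q) * (A ^ (1/q) + w ^ (1/q))) ^ q := by
      rw [Real.mul_rpow hvr (by linarith), rpow_root q v hq hv]
    rw [e1, e2]
    apply Real.rpow_le_rpow (by positivity) _ hq.le
    have hle : w ^ (1/q) ≤ v ^ (1/q) := Real.rpow_le_rpow hw hwv (by positivity)
    nlinarith
  calc A * w * (A ^ (1/q) + v ^ (1/q)) ^ q = A * (w * (A ^ (1/q) + v ^ (1/q)) ^ q) := by ring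
    _ ≤ A * (v * (A ^ (1/q) + w ^ (1/q)) ^ q) := mul_le_mul_of_nonneg_left key hA
    _ = A * v * (A ^ (1/q) + w ^ (1/q)) ^ q := by ring

lemma hfun_lip (q A w v : ℝ) (hq : 0 < q) (hA : 0 ≤ A) (hw : 0 ≤ w) (hwv : w ≤ v) :
    hfun q A v - hfun q A w ≤ v - w := by
  rcases eq_or_lt_of_le hA with hA0 | hA0
  · rw [← hA0, hfun_zero, hfun_zero]; linarith
  have hv : 0 ≤ v := hw.trans hwv
  have hAr : (0:ℝ) < A ^ (1/q) := Real.rpow_pos_of_pos hA0 _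
  have hwr : (0:ℝ) ≤ w ^ (1/q) := Real.rpow_nonneg hw _
  have hvr : (0:ℝ) ≤ v ^ (1/q) := Real.rpow_nonneg hv _
  have hDw : (0:ℝ) < (A ^ (1/q) + w ^ (1/q)) ^ q := Real.rpow_pos_of_pos (by linarith) _
  have hDv : (0:ℝ) < (A ^ (1/q) + v ^ (1/q)) ^ q := Real.rpow_pos_of_pos (by linarith) _
  have hDwv : (A ^ (1/q) + w ^ (1/q)) ^ q ≤ (A ^ (1/q) + v ^ (1/q)) ^ q := by
    apply Real.rpow_le_rpow (by linarith) _ hq.le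
    have : w ^ (1/q) ≤ v ^ (1/q) := Real.rpow_le_rpow hw hwv (by positivity)
    linarith
  have hAD : A ≤ (A ^ (1/q) + v ^ (1/q)) ^ q := le_denom q A v hq hA hv
  unfold hfun
  have h1 : A * w / (A ^ (1/q) + v ^ (1/q)) ^ q ≤ A * w / (A ^ (1/q) + w ^ (1/q)) ^ q := by
    exact div_le_div_of_nonneg_left (mul_nonneg hA hw) hDw hDwv

  have h2 : A * v / (A ^ (1/q) + v ^ (1/q)) ^ q - A * w / (A ^ (1/q) + v ^ (1/q)) ^ q
      = A * (v - w) / (A ^ (1/q) + v ^ (1/q)) ^ q := by ring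
  have h3 : A * (v - w) / (A ^ (1/q) + v ^ (1/q)) ^ q ≤ v - w := by
    rw [div_le_iff₀ hDv]
    calc A * (v - w) = (v - w) * A := by ring
      _ ≤ (v - w) * (A ^ (1/q) + v ^ (1/q)) ^ q :=
          mul_le_mul_of_nonneg_left hAD (by linarith)
      _ = (v - w) * (A ^ (1/q) + v ^ (1/q)) ^ q := rfl
  linarith

lemma hfun_abs_lip_right (q A w v : ℝ) (hq : 0 < q) (hA : 0 ≤ A) (hw : 0 ≤ w) (hv : 0 ≤ v) :
    |hfun q A w - hfun q A v| ≤ |w - v| := by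
  rcases le_total w v with h | h
  · rw [abs_sub_comm, abs_sub_comm w v,
      abs_of_nonneg (by linarith [hfun_mono q A w v hq hA hw h]),
      abs_of_nonneg (by linarith)]
    exact hfun_lip q A w v hq hA hw h
  · rw [abs_of_nonneg (by linarith [hfun_mono q A v w hq hA hv h]),
      abs_of_nonneg (by linarith)]
    exact hfun_lip q A v w hq hA hv h

lemma hfun_abs_lip (q A B w v : ℝ) (hq : 0 < q) (hA : 0 ≤ A) (hB : 0 ≤ B)
    (hw : 0 ≤ w) (hv : 0 ≤ v) :
    |hfun q A w - hfun q B v| ≤ |A - B| + |w - v| := by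
  calc |hfun q A w - hfun q B v|
      ≤ |hfun q A w - hfun q A v| + |hfun q A v - hfun q B v| := abs_sub_le _ _ _
    _ ≤ |w - v| + |A - B| := by
        apply add_le_add (hfun_abs_lip_right q A w v hq hA hw hv)
        rw [hfun_comm q A v, hfun_comm q B v]
        exact hfun_abs_lip_right q v A B hq hv hA hB
    _ = |A - B| + |w - v| := by ring

lemma abs_pow_sub_pow (x z m : ℝ) (n : ℕ) (hx : |x| ≤ m) (hz : |z| ≤ m) :
    |x ^ (n+1) - z ^ (n+1)| ≤ (n+1) * m ^ n * |x - z| := by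
  have hm : 0 ≤ m := (abs_nonneg x).trans hx
  induction n with
  | zero => simp
  | succ n ih =>
    have key : x ^ (n+2) - z ^ (n+2) = x * (x ^ (n+1) - z ^ (n+1)) + (x - z) * z ^ (n+1) := by
      ring
    calc |x ^ (n+2) - z ^ (n+2)|
        ≤ |x * (x ^ (n+1) - z ^ (n+1))| + |(x - z) * z ^ (n+1)| := by
          rw [key]; exact abs_add_le _ _
      _ = |x| * |x ^ (n+1) - z ^ (n+1)| + |x - z| * |z| ^ (n+1) := by
          rw [abs_mul, abs_mul, abs_pow]
      _ ≤ m * ((n+1) * m ^ n * |x - z|) + |x - z| * m ^ (n+1) := by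
          apply add_le_add
          · exact mul_le_mul hx ih (abs_nonneg _) hm
          · exact mul_le_mul_of_nonneg_left (pow_le_pow_left₀ (abs_nonneg _) hz _) (abs_nonneg _)
      _ = ((↑(n+1):ℝ) + 1) * m ^ (n+1) * |x - z| := by push_cast; ring

lemma abs_tsum_le' (f : ℕ → ℝ) (h : Summable fun k => |f k|) :
    |∑' k, f k| ≤ ∑' k, |f k| := by
  have h' : Summable fun k => ‖f k‖ := by simpa [Real.norm_eq_abs] using h
  have := norm_tsum_le_tsum_norm h'
  simpa [Real.norm_eq_abs] using this

lemma summable_c_pow (c : ℕ → ℝ) (hc : Summable fun k => |c k|) (x : ℝ) (hx : |x| ≤ 1) :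
    Summable (fun k => c k * x ^ (k+2)) := by
  apply Summable.of_abs
  apply Summable.of_nonneg_of_le (fun k => abs_nonneg _) _ hc
  intro k
  rw [abs_mul, abs_pow]
  calc |c k| * |x| ^ (k+2) ≤ |c k| * 1 := by
        apply mul_le_mul_of_nonneg_left (pow_le_one₀ (abs_nonneg x) hx) (abs_nonneg _)
    _ = |c k| := mul_one _

lemma tsum_pow_bound (c : ℕ → ℝ) (hc : Summable fun k => |c k|) (x m : ℝ)
    (hx : |x| ≤ m) (hm : m ≤ 1) :
    |∑' k : ℕ, c k * x ^ (k+2)| ≤ (∑' k : ℕ, |c k|) * m ^ 2 := by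
  have hm0 : 0 ≤ m := (abs_nonneg x).trans hx
  have hx1 : |x| ≤ 1 := hx.trans hm
  have hsum := summable_c_pow c hc x hx1
  have hle : ∀ k : ℕ, |c k * x ^ (k+2)| ≤ |c k| * m ^ 2 := by
    intro k
    rw [abs_mul, abs_pow]
    apply mul_le_mul_of_nonneg_left _ (abs_nonneg _)
    calc |x| ^ (k+2) ≤ m ^ (k+2) := pow_le_pow_left₀ (abs_nonneg _) hx _
      _ ≤ m ^ 2 := pow_le_pow_of_le_one hm0 hm (by omega)
  have hsum2 : Summable (fun k => |c k| * m ^ 2) := hc.mul_right _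
  calc |∑' k : ℕ, c k * x ^ (k+2)| ≤ ∑' k : ℕ, |c k * x ^ (k+2)| := by
        exact abs_tsum_le' _ hsum.abs
    _ ≤ ∑' k : ℕ, |c k| * m ^ 2 := Summable.tsum_le_tsum hle hsum.abs hsum2
    _ = (∑' k : ℕ, |c k|) * m ^ 2 := tsum_mul_right

lemma tsum_pow_diff (c : ℕ → ℝ) (hc : Summable fun k => |c k|)
    (hc' : Summable fun k : ℕ => ((k:ℝ)+2) * |c k|) (x z m : ℝ)
    (hx : |x| ≤ m) (hz : |z| ≤ m) (hm : m ≤ 1) :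
    |(∑' k : ℕ, c k * x ^ (k+2)) - ∑' k : ℕ, c k * z ^ (k+2)|
      ≤ (∑' k : ℕ, ((k:ℝ)+2) * |c k|) * (m * |x - z|) := by
  have hm0 : 0 ≤ m := (abs_nonneg x).trans hx
  have hx1 : |x| ≤ 1 := hx.trans hm
  have hz1 : |z| ≤ 1 := hz.trans hm
  have hsx := summable_c_pow c hc x hx1
  have hsz := summable_c_pow c hc z hz1
  rw [← Summable.tsum_sub hsx hsz]
  have hle : ∀ k : ℕ, |c k * x ^ (k+2) - c k * z ^ (k+2)|
      ≤ (((k:ℝ)+2) * |c k|) * (m * |x - z|) := by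
    intro k
    have e : c k * x ^ (k+2) - c k * z ^ (k+2) = c k * (x ^ (k+2) - z ^ (k+2)) := by ring
    rw [e, abs_mul]
    have hpow := abs_pow_sub_pow x z m (k+1) hx hz
    have hmk : m ^ (k+1) ≤ m := by
      calc m ^ (k+1) = m ^ k * m := by ring
        _ ≤ 1 * m := mul_le_mul_of_nonneg_right (pow_le_one₀ hm0 hm) hm0
        _ = m := one_mul m
    calc |c k| * |x ^ (k+2) - z ^ (k+2)|
        ≤ |c k| * (((k:ℝ)+1+1) * m ^ (k+1) * |x - z|) := by
          apply mul_le_mul_of_nonneg_left _ (abs_nonneg _)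
          have : ((k:ℝ)+1+1) = ((k+1:ℕ):ℝ)+1 := by push_cast; ring
          rw [this]
          exact_mod_cast hpow
      _ ≤ |c k| * (((k:ℝ)+2) * m * |x - z|) := by
          apply mul_le_mul_of_nonneg_left _ (abs_nonneg _)
          have h2 : ((k:ℝ)+1+1) * m ^ (k+1) * |x - z| ≤ ((k:ℝ)+2) * m * |x - z| := by
            have : ((k:ℝ)+1+1) = (k:ℝ)+2 := by ring
            rw [this]
            apply mul_le_mul_of_nonneg_right _ (abs_nonneg _)
            exact mul_le_mul_of_nonneg_left hmk (by positivity)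
          exact h2
      _ = (((k:ℝ)+2) * |c k|) * (m * |x - z|) := by ring
  have hsumg : Summable (fun k : ℕ => (((k:ℝ)+2) * |c k|) * (m * |x - z|)) := hc'.mul_right _
  have hsumf : Summable (fun k => |c k * x ^ (k+2) - c k * z ^ (k+2)|) :=
    Summable.of_nonneg_of_le (fun k => abs_nonneg _) hle hsumg
  calc |∑' k : ℕ, (c k * x ^ (k+2) - c k * z ^ (k+2))|
      ≤ ∑' k : ℕ, |c k * x ^ (k+2) - c k * z ^ (k+2)| := by
        exact abs_tsum_le' _ (by exact hsumf)
    _ ≤ ∑' k : ℕ, (((k:ℝ)+2) * |c k|) * (m * |x - z|) := Summable.tsum_le_tsum hle hsumf hsumg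
    _ = (∑' k : ℕ, ((k:ℝ)+2) * |c k|) * (m * |x - z|) := tsum_mul_right


/-- Lemma 3.7: for `R > 0`, `δ ∈ (0, κ₀/R]` and a continuous curve
`u : [0,δ] → Y` (continuity in the supremum norm) with `‖u(t)‖ ≤ R t²`, the map
`t ↦ f(t,u(t))` is continuous from `[0,δ]` into `Y`; if moreover `u` is `α`-Hölder
continuous for some `α ∈ (0,1)`, then so is `t ↦ f(t,u(t))`. -/
lemma abs_add4 (a b c d : ℝ) : |a + b - c + d| ≤ |a| + |b| + |c| + |d| := by
  calc |a + b - c + d| ≤ |a + b - c| + |d| := abs_add_le _ _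
    _ ≤ (|a + b| + |c|) + |d| := by linarith [abs_sub (a + b) c]
    _ ≤ ((|a| + |b|) + |c|) + |d| := by linarith [abs_add_le a b]
    _ = |a| + |b| + |c| + |d| := by ring

theorem nonlinearity_continuous_along_curves
    (d : ℕ) (hd : 1 ≤ d) (p θ κ₀ : ℝ) (hp : 1 < p) (hθ : 0 ≤ θ) (hκ₀ : 0 < κ₀)
    (η γ lam a : Euc d → ℝ)
    (hηc : Continuous η) (hγc : Continuous γ) (hlamc : Continuous lam) (hac : Continuous a)
    (hηb : ∃ C, ∀ y, |η y| ≤ C) (hγb : ∃ C, ∀ y, |γ y| ≤ C)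
    (hlamb : ∃ C, ∀ y, |lam y| ≤ C) (hab : ∃ C, ∀ y, |a y| ≤ C)
    (hηκ : ∀ y, κ₀ ≤ η y) (hγ0 : ∀ y, 0 ≤ γ y) (hlam0 : ∀ y, 0 ≤ lam y)
    (R δ : ℝ) (hR : 0 < R) (hδ0 : 0 < δ) (hδ : δ ≤ κ₀ / R)
    (u : ℝ → Euc d → ℝ)
    (huc : ∀ t ∈ Set.Icc (0 : ℝ) δ, Continuous (u t))
    (huY : ∀ t₀ ∈ Set.Icc (0 : ℝ) δ, ∀ ε > (0 : ℝ), ∃ ρ > (0 : ℝ),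
      ∀ t ∈ Set.Icc (0 : ℝ) δ, |t - t₀| ≤ ρ → ∀ y, |u t y - u t₀ y| ≤ ε)
    (hub : ∀ t ∈ Set.Icc (0 : ℝ) δ, ∀ y, |u t y| ≤ R * t ^ 2) :
    (∀ t₀ ∈ Set.Icc (0 : ℝ) δ, ∀ ε > (0 : ℝ), ∃ ρ > (0 : ℝ),
      ∀ t ∈ Set.Icc (0 : ℝ) δ, |t - t₀| ≤ ρ → ∀ y,
        |fNL p θ η γ lam a t (u t) y - fNL p θ η γ lam a t₀ (u t₀) y| ≤ ε) ∧
    (∀ α : ℝ, 0 < α → α < 1 →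
      (∃ C, ∀ s ∈ Set.Icc (0 : ℝ) δ, ∀ t ∈ Set.Icc (0 : ℝ) δ, ∀ y,
        |u s y - u t y| ≤ C * |s - t| ^ α) →
      ∃ C, ∀ s ∈ Set.Icc (0 : ℝ) δ, ∀ t ∈ Set.Icc (0 : ℝ) δ, ∀ y,
        |fNL p θ η γ lam a s (u s) y - fNL p θ η γ lam a t (u t) y| ≤ C * |s - t| ^ α) := by
  obtain ⟨Ca, hCa⟩ := hab
  obtain ⟨Cγ, hCγ⟩ := hγb
  obtain ⟨Cl, hCl⟩ := hlamb
  obtain ⟨Cη, hCη⟩ := hηb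
  have y₀ : Euc d := 0
  have hCa0 : 0 ≤ Ca := (abs_nonneg _).trans (hCa y₀)
  have hCγ0 : 0 ≤ Cγ := (abs_nonneg _).trans (hCγ y₀)
  have hCl0 : 0 ≤ Cl := (abs_nonneg _).trans (hCl y₀)
  have hCη0 : 0 ≤ Cη := (abs_nonneg _).trans (hCη y₀)
  have hp0 : (0:ℝ) < p - 1 := by linarith
  have hαb : 1 < 1 / (p - 1) + 1 := by
    have : 0 < 1 / (p - 1) := one_div_pos.mpr hp0
    linarith
  set c : ℕ → ℝ := fun k => rbinom (1 / (p - 1) + 1) (k + 2) with hc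
  have sumM' : Summable (fun k : ℕ => ((k:ℝ) + 2) * |c k|) :=
    summable_rbinom_mul _ hαb
  have sumM : Summable (fun k : ℕ => |c k|) := by
    apply Summable.of_nonneg_of_le (fun k => abs_nonneg _) _ sumM'
    intro k
    have h1 : (1:ℝ) ≤ (k:ℝ) + 2 := by
      have := Nat.cast_nonneg (α := ℝ) k
      linarith
    nlinarith [abs_nonneg (c k)]
  set M : ℝ := ∑' k : ℕ, |c k| with hM
  set M' : ℝ := ∑' k : ℕ, ((k:ℝ) + 2) * |c k| with hM'
  have hM0 : 0 ≤ M := tsum_nonneg (fun k => abs_nonneg _)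
  have hM'0 : 0 ≤ M' := tsum_nonneg (fun k => by positivity)
  have hRδ : R * δ ≤ κ₀ := by
    rw [le_div_iff₀ hR] at hδ; linarith
  -- bound on x = u t y / (t η y)
  have xb : ∀ t ∈ Set.Icc (0:ℝ) δ, ∀ y, |u t y / (t * η y)| ≤ R * t / κ₀ := by
    intro t ht y
    rcases eq_or_lt_of_le ht.1 with ht0 | ht0
    · rw [← ht0]; simp
    have hηy : 0 < η y := lt_of_lt_of_le hκ₀ (hηκ y)
    have hden : 0 < t * η y := by positivity
    rw [abs_div, abs_of_pos hden]
    have htne : t ≠ 0 := ht0.ne'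
    have hκne : κ₀ ≠ 0 := hκ₀.ne'
    calc |u t y| / (t * η y) ≤ (R * t ^ 2) / (t * κ₀) := by
          apply div_le_div₀ (mul_nonneg hR.le (by positivity)) (hub t ht y)
            (mul_pos ht0 hκ₀)
          exact mul_le_mul_of_nonneg_left (hηκ y) ht.1
      _ = R * t / κ₀ := by field_simp
  have mb : ∀ t ∈ Set.Icc (0:ℝ) δ, R * t / κ₀ ≤ 1 := by
    intro t ht
    rw [div_le_one hκ₀]
    calc R * t ≤ R * δ := mul_le_mul_of_nonneg_left ht.2 hR.le
      _ ≤ κ₀ := hRδ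
  have wb : ∀ t ∈ Set.Icc (0:ℝ) δ, ∀ y, 0 ≤ t * η y + u t y := by
    intro t ht y
    have h1 : |u t y| ≤ R * t ^ 2 := hub t ht y
    have h2 : R * t ^ 2 ≤ κ₀ * t := by
      have : R * t ≤ κ₀ := by
        calc R * t ≤ R * δ := mul_le_mul_of_nonneg_left ht.2 hR.le
          _ ≤ κ₀ := hRδ
      nlinarith [ht.1]
    have h3 : κ₀ * t ≤ η y * t := mul_le_mul_of_nonneg_right (hηκ y) ht.1
    have := neg_abs_le (u t y)
    nlinarith
  -- rewrite fNL using hfun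
  have hfNL : ∀ r ∈ Set.Icc (0:ℝ) δ, ∀ y,
      fNL p θ η γ lam a r (u r) y
        = r * a y + r ^ p * lam y
          - (η y / (1 / (p - 1))) * (∑' k : ℕ, c k * (u r y / (r * η y)) ^ (k + 2))
          + θ * (hfun (p - 1) (r ^ p * γ y) (r * η y + u r y) - (r * η y + u r y)) := by
    intro r hr y
    simp only [fNL, hfun, hc]
    rw [abs_of_nonneg (wb r hr y)]
  set K : ℝ := Ca + Cl * (p * δ ^ (p - 1))
      + (Cη * (p - 1)) * (M' * (2 * R / κ₀ ^ 2) + M' * (2 * R ^ 2 * δ / κ₀ ^ 2)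
          + M * (4 * R ^ 2 * δ / κ₀ ^ 2))
      + θ * (Cγ * (p * δ ^ (p - 1)) + 2 * Cη + 2) with hK
  have hδp0 : (0:ℝ) ≤ δ ^ (p - 1) := Real.rpow_nonneg hδ0.le _
  have hpδ0 : (0:ℝ) ≤ p * δ ^ (p - 1) := mul_nonneg (by linarith) hδp0
  have hCηp0 : (0:ℝ) ≤ Cη * (p - 1) := mul_nonneg hCη0 hp0.le
  have hq1 : (0:ℝ) ≤ 2 * R / κ₀ ^ 2 := div_nonneg (by linarith) (by positivity)
  have hq2 : (0:ℝ) ≤ 2 * R ^ 2 * δ / κ₀ ^ 2 :=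
    div_nonneg (mul_nonneg (by positivity) hδ0.le) (by positivity)
  have hq3 : (0:ℝ) ≤ 4 * R ^ 2 * δ / κ₀ ^ 2 :=
    div_nonneg (mul_nonneg (by positivity) hδ0.le) (by positivity)
  -- the key Lipschitz-type estimate, for s ≤ t
  have key2 : ∀ s ∈ Set.Icc (0:ℝ) δ, ∀ t ∈ Set.Icc (0:ℝ) δ, s ≤ t → ∀ E, 0 ≤ E →
      (∀ y, |u s y - u t y| ≤ E) → ∀ y,
      |fNL p θ η γ lam a s (u s) y - fNL p θ η γ lam a t (u t) y| ≤ K * (|s - t| + E) := by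
    intro s hs t ht hst E hE hEu y
    have hηy : 0 < η y := lt_of_lt_of_le hκ₀ (hηκ y)
    set D : ℝ := |s - t| with hD
    have hDts : D = t - s := by rw [hD, abs_sub_comm, abs_of_nonneg (by linarith)]
    have hD0 : 0 ≤ D := abs_nonneg _
    set xs : ℝ := u s y / (s * η y) with hxs_def
    set xt : ℝ := u t y / (t * η y) with hxt_def
    set Ss : ℝ := ∑' k : ℕ, c k * xs ^ (k + 2) with hSs
    set St : ℝ := ∑' k : ℕ, c k * xt ^ (k + 2) with hSt
    set ws : ℝ := s * η y + u s y with hws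
    set wt : ℝ := t * η y + u t y with hwt
    have hxsb : |xs| ≤ R * s / κ₀ := xb s hs y
    have hxtb : |xt| ≤ R * t / κ₀ := xb t ht y
    have hmt1 : R * t / κ₀ ≤ 1 := mb t ht
    have hms1 : R * s / κ₀ ≤ 1 := mb s hs
    have hRst : R * s / κ₀ ≤ R * t / κ₀ :=
      (div_le_div_iff_of_pos_right hκ₀).2 (mul_le_mul_of_nonneg_left hst hR.le)
    have hxsb' : |xs| ≤ R * t / κ₀ := hxsb.trans hRst
    have habsB := abs_rpow_sub_rpow_le p δ s t hp.le hs ht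
    -- the series difference bound
    set B : ℝ := M' * (2 * R / κ₀ ^ 2) + M' * (2 * R ^ 2 * δ / κ₀ ^ 2)
        + M * (4 * R ^ 2 * δ / κ₀ ^ 2) with hB
    have hB0 : 0 ≤ B :=
      add_nonneg (add_nonneg (mul_nonneg hM'0 hq1) (mul_nonneg hM'0 hq2))
        (mul_nonneg hM0 hq3)
    have hSdiff : |Ss - St| ≤ B * (D + E) := by
      rcases eq_or_lt_of_le ht.1 with ht0 | ht0
      · -- t = 0, hence s = 0
        have hs0 : s = 0 := le_antisymm (hst.trans ht0.symm.le) hs.1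
        have hxs0 : xs = 0 := by rw [hxs_def, hs0]; simp
        have hxt0 : xt = 0 := by rw [hxt_def, ← ht0]; simp
        have hss0 : Ss = 0 := by rw [hSs, hxs0]; simp
        have hst0 : St = 0 := by rw [hSt, hxt0]; simp
        rw [hss0, hst0, sub_self, abs_zero]
        exact mul_nonneg hB0 (add_nonneg hD0 hE)
      rcases le_or_gt t (2 * s) with hcase | hcase
      · -- t ≤ 2s, so s > 0
        have hs0 : 0 < s := by linarith
        have hts2 : t / s ≤ 2 := by rw [div_le_iff₀ hs0]; linarith
        have hsne : s ≠ 0 := hs0.ne'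
        have htne : t ≠ 0 := ht0.ne'
        have hκne : κ₀ ≠ 0 := hκ₀.ne'
        have hηne : η y ≠ 0 := hηy.ne'
        have hdiff := tsum_pow_diff c sumM sumM' xs xt (R * t / κ₀) hxsb' hxtb hmt1
        have hxd : |xs - xt| ≤ E / (s * κ₀) + R * t ^ 2 * ((t - s) / (s * t * κ₀)) := by
          have e : xs - xt = (u s y - u t y) / (s * η y)
              + u t y * ((t - s) / (s * t * η y)) := by
            rw [hxs_def, hxt_def]
            field_simp
            ring
          rw [e]
          have h1 : |(u s y - u t y) / (s * η y)| ≤ E / (s * κ₀) := by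
            rw [abs_div, abs_of_pos (mul_pos hs0 hηy)]
            apply div_le_div₀ hE (hEu y) (mul_pos hs0 hκ₀)
            exact mul_le_mul_of_nonneg_left (hηκ y) hs0.le
          have h2 : |u t y * ((t - s) / (s * t * η y))|
              ≤ R * t ^ 2 * ((t - s) / (s * t * κ₀)) := by
            rw [abs_mul, abs_div, abs_of_nonneg (by linarith : (0:ℝ) ≤ t - s),
              abs_of_pos (mul_pos (mul_pos hs0 ht0) hηy)]
            apply mul_le_mul (hub t ht y)
              _ (div_nonneg (by linarith) (mul_pos (mul_pos hs0 ht0) hηy).le)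
              (mul_nonneg hR.le (by positivity))
            apply div_le_div₀ (by linarith) le_rfl (mul_pos (mul_pos hs0 ht0) hκ₀)
            exact mul_le_mul_of_nonneg_left (hηκ y) (mul_pos hs0 ht0).le
          calc |(u s y - u t y) / (s * η y) + u t y * ((t - s) / (s * t * η y))|
              ≤ |(u s y - u t y) / (s * η y)| + |u t y * ((t - s) / (s * t * η y))| :=
                abs_add_le _ _
            _ ≤ E / (s * κ₀) + R * t ^ 2 * ((t - s) / (s * t * κ₀)) := add_le_add h1 h2
        have e2 : (R * t / κ₀) * (E / (s * κ₀) + R * t ^ 2 * ((t - s) / (s * t * κ₀)))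
            = (t / s) * (R * E / κ₀ ^ 2) + (t / s) * (R ^ 2 * t * (t - s) / κ₀ ^ 2) := by
          field_simp
        have h3 : (R * t / κ₀) * |xs - xt|
            ≤ 2 * (R * E / κ₀ ^ 2) + 2 * (R ^ 2 * δ * (t - s) / κ₀ ^ 2) := by
          calc (R * t / κ₀) * |xs - xt|
              ≤ (R * t / κ₀) * (E / (s * κ₀) + R * t ^ 2 * ((t - s) / (s * t * κ₀))) :=
                mul_le_mul_of_nonneg_left hxd
                  (div_nonneg (mul_nonneg hR.le ht0.le) hκ₀.le)
            _ = (t / s) * (R * E / κ₀ ^ 2) + (t / s) * (R ^ 2 * t * (t - s) / κ₀ ^ 2) := e2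
            _ ≤ 2 * (R * E / κ₀ ^ 2) + 2 * (R ^ 2 * δ * (t - s) / κ₀ ^ 2) := by
                apply add_le_add
                · exact mul_le_mul_of_nonneg_right hts2
                    (div_nonneg (mul_nonneg hR.le hE) (by positivity))
                · apply mul_le_mul hts2 _
                    (div_nonneg (mul_nonneg (mul_nonneg (by positivity) ht0.le)
                      (by linarith)) (by positivity)) (by norm_num)
                  refine (div_le_div_iff_of_pos_right (pow_pos hκ₀ 2)).2 ?_
                  have h9 : R ^ 2 * t ≤ R ^ 2 * δ :=
                    mul_le_mul_of_nonneg_left ht.2 (sq_nonneg R)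
                  exact mul_le_mul_of_nonneg_right h9 (by linarith)
        calc |Ss - St| ≤ M' * ((R * t / κ₀) * |xs - xt|) := hdiff
          _ ≤ M' * (2 * (R * E / κ₀ ^ 2) + 2 * (R ^ 2 * δ * (t - s) / κ₀ ^ 2)) :=
              mul_le_mul_of_nonneg_left h3 hM'0
          _ = M' * (2 * R / κ₀ ^ 2) * E + M' * (2 * R ^ 2 * δ / κ₀ ^ 2) * (t - s) := by
              ring
          _ ≤ B * (D + E) := by
              rw [hB, hDts]
              linarith [mul_nonneg (mul_nonneg hM'0 hq1) (by linarith : (0:ℝ) ≤ t - s),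
                mul_nonneg (mul_nonneg hM'0 hq2) hE,
                mul_nonneg (mul_nonneg hM0 hq3) (by linarith : (0:ℝ) ≤ t - s),
                mul_nonneg (mul_nonneg hM0 hq3) hE]
      · -- 2s < t, use size bounds
        have ht2 : t ≤ 2 * (t - s) := by linarith
        have hb1 := tsum_pow_bound c sumM xs (R * s / κ₀) hxsb hms1
        have hb2 := tsum_pow_bound c sumM xt (R * t / κ₀) hxtb hmt1
        have hsq : (R * s / κ₀) ^ 2 ≤ (R * t / κ₀) ^ 2 :=
          pow_le_pow_left₀ (div_nonneg (mul_nonneg hR.le hs.1) hκ₀.le)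
            ((div_le_div_iff_of_pos_right hκ₀).2 (mul_le_mul_of_nonneg_left hst hR.le)) 2
        have htt : t ^ 2 ≤ δ * (2 * (t - s)) := by
          have h1 : t * t ≤ δ * t := mul_le_mul_of_nonneg_right ht.2 ht.1
          have h2 : δ * t ≤ δ * (2 * (t - s)) := mul_le_mul_of_nonneg_left ht2 hδ0.le
          calc t ^ 2 = t * t := by ring
            _ ≤ δ * t := h1
            _ ≤ δ * (2 * (t - s)) := h2
        calc |Ss - St| ≤ |Ss| + |St| := abs_sub _ _
          _ ≤ M * (R * s / κ₀) ^ 2 + M * (R * t / κ₀) ^ 2 := add_le_add hb1 hb2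
          _ ≤ M * (R * t / κ₀) ^ 2 + M * (R * t / κ₀) ^ 2 :=
              add_le_add (mul_le_mul_of_nonneg_left hsq hM0) le_rfl
          _ = M * (2 * R ^ 2 / κ₀ ^ 2) * t ^ 2 := by ring
          _ ≤ M * (2 * R ^ 2 / κ₀ ^ 2) * (δ * (2 * (t - s))) :=
              mul_le_mul_of_nonneg_left htt (mul_nonneg hM0 (by positivity))
          _ = M * (4 * R ^ 2 * δ / κ₀ ^ 2) * (t - s) := by ring
          _ ≤ B * (D + E) := by
              rw [hB, hDts]
              linarith [mul_nonneg (mul_nonneg hM'0 hq1) (by linarith : (0:ℝ) ≤ t - s),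
                mul_nonneg (mul_nonneg hM'0 hq1) hE,
                mul_nonneg (mul_nonneg hM'0 hq2) (by linarith : (0:ℝ) ≤ t - s),
                mul_nonneg (mul_nonneg hM'0 hq2) hE,
                mul_nonneg (mul_nonneg hM0 hq3) hE]
    -- piece bounds
    have bound1 : |s * a y - t * a y| ≤ Ca * (D + E) := by
      calc |s * a y - t * a y| = |s - t| * |a y| := by rw [← abs_mul]; ring_nf
        _ ≤ D * Ca := by
            rw [← hD]
            exact mul_le_mul_of_nonneg_left (hCa y) hD0
        _ ≤ Ca * (D + E) := by linarith [mul_nonneg hCa0 hE, mul_nonneg hCa0 hD0]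
    have bound2 : |s ^ p * lam y - t ^ p * lam y| ≤ (Cl * (p * δ ^ (p - 1))) * (D + E) := by
      calc |s ^ p * lam y - t ^ p * lam y| = |s ^ p - t ^ p| * |lam y| := by
            rw [← abs_mul]; ring_nf
        _ ≤ (p * δ ^ (p - 1) * D) * Cl := by
            apply mul_le_mul _ (hCl y) (abs_nonneg _) (mul_nonneg hpδ0 hD0)
            rw [hD]; exact habsB
        _ ≤ (Cl * (p * δ ^ (p - 1))) * (D + E) := by
            linarith [mul_nonneg (mul_nonneg hCl0 hpδ0) hE]
    have hfac : |η y / (1 / (p - 1))| ≤ Cη * (p - 1) := by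
      rw [div_eq_mul_inv, one_div, inv_inv, abs_mul, abs_of_pos hp0]
      exact mul_le_mul_of_nonneg_right (hCη y) hp0.le
    have bound3 : |η y / (1 / (p - 1))| * |Ss - St| ≤ ((Cη * (p - 1)) * B) * (D + E) := by
      calc |η y / (1 / (p - 1))| * |Ss - St| ≤ (Cη * (p - 1)) * (B * (D + E)) :=
            mul_le_mul hfac hSdiff (abs_nonneg _) hCηp0
        _ = ((Cη * (p - 1)) * B) * (D + E) := by ring
    -- theta part
    have hAs0 : 0 ≤ s ^ p * γ y := mul_nonneg (Real.rpow_nonneg hs.1 _) (hγ0 y)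
    have hAt0 : 0 ≤ t ^ p * γ y := mul_nonneg (Real.rpow_nonneg ht.1 _) (hγ0 y)
    have hws0 : 0 ≤ ws := wb s hs y
    have hwt0 : 0 ≤ wt := wb t ht y
    have hwd : |ws - wt| ≤ Cη * D + E := by
      have e : ws - wt = (s - t) * η y + (u s y - u t y) := by rw [hws, hwt]; ring
      rw [e]
      calc |(s - t) * η y + (u s y - u t y)|
          ≤ |(s - t) * η y| + |u s y - u t y| := abs_add_le _ _
        _ ≤ D * Cη + E := by
            apply add_le_add _ (hEu y)
            rw [abs_mul, ← hD]
            exact mul_le_mul_of_nonneg_left (hCη y) hD0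
        _ = Cη * D + E := by ring
    have hAd : |s ^ p * γ y - t ^ p * γ y| ≤ (Cγ * (p * δ ^ (p - 1))) * D := by
      calc |s ^ p * γ y - t ^ p * γ y| = |s ^ p - t ^ p| * |γ y| := by
            rw [← abs_mul]; ring_nf
        _ ≤ (p * δ ^ (p - 1) * D) * Cγ := by
            apply mul_le_mul _ (hCγ y) (abs_nonneg _) (mul_nonneg hpδ0 hD0)
            rw [hD]; exact habsB
        _ = (Cγ * (p * δ ^ (p - 1))) * D := by ring
    have hhf : |hfun (p - 1) (s ^ p * γ y) ws - hfun (p - 1) (t ^ p * γ y) wt|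
        ≤ (Cγ * (p * δ ^ (p - 1))) * D + (Cη * D + E) := by
      calc |hfun (p - 1) (s ^ p * γ y) ws - hfun (p - 1) (t ^ p * γ y) wt|
          ≤ |s ^ p * γ y - t ^ p * γ y| + |ws - wt| :=
            hfun_abs_lip (p - 1) _ _ _ _ hp0 hAs0 hAt0 hws0 hwt0
        _ ≤ (Cγ * (p * δ ^ (p - 1))) * D + (Cη * D + E) := add_le_add hAd hwd
    have bound4 : |θ * ((hfun (p - 1) (s ^ p * γ y) ws - hfun (p - 1) (t ^ p * γ y) wt)
        - (ws - wt))| ≤ (θ * (Cγ * (p * δ ^ (p - 1)) + 2 * Cη + 2)) * (D + E) := by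
      rw [abs_mul, abs_of_nonneg hθ]
      have h1 : |(hfun (p - 1) (s ^ p * γ y) ws - hfun (p - 1) (t ^ p * γ y) wt) - (ws - wt)|
          ≤ (Cγ * (p * δ ^ (p - 1)) + 2 * Cη + 2) * (D + E) := by
        calc |(hfun (p - 1) (s ^ p * γ y) ws - hfun (p - 1) (t ^ p * γ y) wt) - (ws - wt)|
            ≤ |hfun (p - 1) (s ^ p * γ y) ws - hfun (p - 1) (t ^ p * γ y) wt| + |ws - wt| :=
              abs_sub _ _
          _ ≤ ((Cγ * (p * δ ^ (p - 1))) * D + (Cη * D + E)) + (Cη * D + E) :=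
              add_le_add hhf hwd
          _ ≤ (Cγ * (p * δ ^ (p - 1)) + 2 * Cη + 2) * (D + E) := by
              linarith [mul_nonneg (mul_nonneg hCγ0 hpδ0) hE,
                mul_nonneg hCη0 hE, hD0, hE]
      calc θ * |(hfun (p - 1) (s ^ p * γ y) ws - hfun (p - 1) (t ^ p * γ y) wt) - (ws - wt)|
          ≤ θ * ((Cγ * (p * δ ^ (p - 1)) + 2 * Cη + 2) * (D + E)) :=
            mul_le_mul_of_nonneg_left h1 hθ
        _ = (θ * (Cγ * (p * δ ^ (p - 1)) + 2 * Cη + 2)) * (D + E) := by ring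
    -- assemble
    rw [hfNL s hs y, hfNL t ht y]
    have hsplit : (s * a y + s ^ p * lam y
          - (η y / (1 / (p - 1))) * Ss + θ * (hfun (p - 1) (s ^ p * γ y) ws - ws))
        - (t * a y + t ^ p * lam y
          - (η y / (1 / (p - 1))) * St + θ * (hfun (p - 1) (t ^ p * γ y) wt - wt))
        = (s * a y - t * a y) + (s ^ p * lam y - t ^ p * lam y)
          - (η y / (1 / (p - 1))) * (Ss - St)
          + θ * ((hfun (p - 1) (s ^ p * γ y) ws - hfun (p - 1) (t ^ p * γ y) wt)
              - (ws - wt)) := by ring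
    rw [hsplit]
    calc |(s * a y - t * a y) + (s ^ p * lam y - t ^ p * lam y)
          - (η y / (1 / (p - 1))) * (Ss - St)
          + θ * ((hfun (p - 1) (s ^ p * γ y) ws - hfun (p - 1) (t ^ p * γ y) wt)
              - (ws - wt))|
        ≤ |s * a y - t * a y| + |s ^ p * lam y - t ^ p * lam y|
          + |(η y / (1 / (p - 1))) * (Ss - St)|
          + |θ * ((hfun (p - 1) (s ^ p * γ y) ws - hfun (p - 1) (t ^ p * γ y) wt)
              - (ws - wt))| := abs_add4 _ _ _ _
      _ ≤ Ca * (D + E) + (Cl * (p * δ ^ (p - 1))) * (D + E)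
          + ((Cη * (p - 1)) * B) * (D + E)
          + (θ * (Cγ * (p * δ ^ (p - 1)) + 2 * Cη + 2)) * (D + E) := by
          apply add_le_add (add_le_add (add_le_add bound1 bound2) _) bound4
          rw [abs_mul]
          exact bound3
      _ = K * (D + E) := by rw [hK, hB]; ring
  -- symmetrized key
  have key : ∀ s ∈ Set.Icc (0:ℝ) δ, ∀ t ∈ Set.Icc (0:ℝ) δ, ∀ E, 0 ≤ E →
      (∀ y, |u s y - u t y| ≤ E) → ∀ y,
      |fNL p θ η γ lam a s (u s) y - fNL p θ η γ lam a t (u t) y| ≤ K * (|s - t| + E) := by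
    intro s hs t ht E hE hEu y
    rcases le_total s t with h | h
    · exact key2 s hs t ht h E hE hEu y
    · have := key2 t ht s hs h E hE (fun y => by rw [abs_sub_comm]; exact hEu y) y
      rw [abs_sub_comm, abs_sub_comm s t]
      exact this
  set Kp : ℝ := |K| + 1 with hKp
  have hKp0 : 0 < Kp := by positivity
  have hKKp : K ≤ Kp := by
    calc K ≤ |K| := le_abs_self K
      _ ≤ Kp := by rw [hKp]; linarith
  constructor
  · -- continuity
    intro t₀ ht₀ ε hε
    have hε2 : 0 < ε / (2 * Kp) := div_pos hε (by positivity)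
    obtain ⟨ρ₁, hρ₁, hu⟩ := huY t₀ ht₀ (ε / (2 * Kp)) hε2
    refine ⟨min ρ₁ (ε / (2 * Kp)), lt_min hρ₁ hε2, ?_⟩
    intro t ht hd y
    have hd1 : |t - t₀| ≤ ρ₁ := hd.trans (min_le_left _ _)
    have hd2 : |t - t₀| ≤ ε / (2 * Kp) := hd.trans (min_le_right _ _)
    have hEu := hu t ht hd1
    have h := key t ht t₀ ht₀ (ε / (2 * Kp)) hε2.le hEu y
    calc |fNL p θ η γ lam a t (u t) y - fNL p θ η γ lam a t₀ (u t₀) y|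
        ≤ K * (|t - t₀| + ε / (2 * Kp)) := h
      _ ≤ Kp * (ε / (2 * Kp) + ε / (2 * Kp)) := by
          apply mul_le_mul hKKp (by linarith)
            (by linarith [abs_nonneg (t - t₀)]) hKp0.le
      _ = ε := by
          have hKpne : Kp ≠ 0 := hKp0.ne'
          field_simp
          ring
  · -- Hölder
    intro α hα0 hα1 ⟨C, hC⟩
    refine ⟨Kp * (δ ^ (1 - α) + max C 0), ?_⟩
    intro s hs t ht y
    set E : ℝ := max C 0 * |s - t| ^ α with hE_def
    have habsα : (0:ℝ) ≤ |s - t| ^ α := Real.rpow_nonneg (abs_nonneg _) _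
    have hE0 : 0 ≤ E := mul_nonneg (le_max_right C 0) habsα
    have hEu : ∀ y, |u s y - u t y| ≤ E := by
      intro y
      calc |u s y - u t y| ≤ C * |s - t| ^ α := hC s hs t ht y
        _ ≤ max C 0 * |s - t| ^ α := mul_le_mul_of_nonneg_right (le_max_left C 0) habsα
    have h := key s hs t ht E hE0 hEu y
    have hstδ : |s - t| ≤ δ := by
      rw [abs_sub_le_iff]
      constructor <;> [linarith [hs.2, ht.1]; linarith [ht.2, hs.1]]
    have hDb : |s - t| ≤ δ ^ (1 - α) * |s - t| ^ α := by
      rcases eq_or_lt_of_le (abs_nonneg (s - t)) with h0 | h0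
      · rw [← h0]
        exact mul_nonneg (Real.rpow_nonneg hδ0.le _) (Real.rpow_nonneg le_rfl _)
      · have e : |s - t| = |s - t| ^ (1 - α) * |s - t| ^ α := by
          rw [← Real.rpow_add h0]
          norm_num
        calc |s - t| = |s - t| ^ (1 - α) * |s - t| ^ α := e
          _ ≤ δ ^ (1 - α) * |s - t| ^ α :=
            mul_le_mul_of_nonneg_right
              (Real.rpow_le_rpow (abs_nonneg _) hstδ (by linarith)) habsα
    calc |fNL p θ η γ lam a s (u s) y - fNL p θ η γ lam a t (u t) y|
        ≤ K * (|s - t| + E) := h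
      _ ≤ Kp * (δ ^ (1 - α) * |s - t| ^ α + E) := by
          apply mul_le_mul hKKp (by linarith)
            (by linarith [abs_nonneg (s - t)]) hKp0.le
      _ = Kp * (δ ^ (1 - α) + max C 0) * |s - t| ^ α := by rw [hE_def]; ring
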